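/- arXiv:1211.6388 — 2 statements merged into one kernel-verified Lean document; each statement's English description precedes it below -/
import Mathlib

section
/- If f, g: ℕ → E(q) are q-holonomic sequences, then their sum f + g is q-holonomic. -/
open scoped BigOperators

/-- A sequence `f : ℕ → E(q)` is `q`-holonomic if it satisfies a nontrivial linear
recursion `∑_{j=0}^d a_j(q, qⁿ) f(n+j) = 0` with coefficients `a_j ∈ E[u,v]`, not all zero. -/
def IsQHolonomic {E : Type} [Field E] (f : ℕ → RatFunc E) : Prop :=
  ∃ (d : ℕ) (a : ℕ → MvPolynomial (Fin 2) E),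
    (∃ j ≤ d, a j ≠ 0) ∧
    ∀ n : ℕ, ∑ j ∈ Finset.range (d + 1),
      (MvPolynomial.aeval ![RatFunc.X, (RatFunc.X : RatFunc E) ^ n] (a j)) * f (n + j) = 0

set_option maxHeartbeats 1000000
set_option synthInstance.maxHeartbeats 1000000

namespace QHolAux

variable (E : Type) [Field E]

abbrev R2 := MvPolynomial (Fin 2) E

abbrev Gm := Filter.Germ (Filter.atTop : Filter ℕ) (RatFunc E)

abbrev K := FractionRing (R2 E)

noncomputable def ev (n : ℕ) : R2 E →ₐ[E] RatFunc E :=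
  MvPolynomial.aeval ![RatFunc.X, (RatFunc.X : RatFunc E) ^ n]

noncomputable def evP (n : ℕ) : R2 E →ₐ[E] Polynomial E :=
  MvPolynomial.aeval ![Polynomial.X, (Polynomial.X : Polynomial E) ^ n]

lemma ev_eq_map (n : ℕ) (p : R2 E) :
    ev E n p = algebraMap (Polynomial E) (RatFunc E) (evP E n p) := by
  have h : ![RatFunc.X, (RatFunc.X : RatFunc E) ^ n]
      = fun i => (IsScalarTower.toAlgHom E (Polynomial E) (RatFunc E))
        (![Polynomial.X, (Polynomial.X : Polynomial E) ^ n] i) := by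
    funext i
    fin_cases i <;> simp [RatFunc.algebraMap_X]
  rw [ev, evP, h, ← MvPolynomial.comp_aeval_apply]
  rfl

lemma ev_ne_of_evP_ne (n : ℕ) {p : R2 E} (h : evP E n p ≠ 0) :
    ev E n p ≠ 0 := by
  rw [ev_eq_map]
  intro hc
  exact h (RatFunc.algebraMap_injective E (by simpa using hc))

lemma evP_apply (n : ℕ) (p : R2 E) :
    evP E n p = ∑ s ∈ p.support,
      Polynomial.C (MvPolynomial.coeff s p) * Polynomial.X ^ (s 0 + n * s 1) := by
  conv_lhs => rw [p.as_sum]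
  rw [map_sum]
  refine Finset.sum_congr rfl fun s _ => ?_
  rw [evP, MvPolynomial.aeval_monomial, Finsupp.prod_pow]
  rw [Fin.prod_univ_two]
  simp only [Matrix.cons_val_zero, Matrix.cons_val_one, Matrix.head_cons]
  rw [← pow_mul, ← pow_add]
  rfl

lemma evP_eventually_ne {E : Type} [Field E] {p : R2 E} (hp : p ≠ 0) :
    ∃ N, ∀ n ≥ N, evP E n p ≠ 0 := by
  classical
  have hne : p.support.Nonempty := by
    rwa [Finset.nonempty_iff_ne_empty, Ne, MvPolynomial.support_eq_empty]
  set t1 := p.support.sup (fun s => s 1) with ht1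
  have hsupp' : (p.support.filter (fun s => s 1 = t1)).Nonempty := by
    obtain ⟨s, hs, hseq⟩ := Finset.exists_mem_eq_sup p.support hne (fun s => s 1)
    exact ⟨s, Finset.mem_filter.2 ⟨hs, hseq.symm⟩⟩
  obtain ⟨σ, hσmem, hσ0⟩ := Finset.exists_mem_eq_sup _ hsupp' (fun s => s 0)
  obtain ⟨hσsupp, hσ1⟩ := Finset.mem_filter.1 hσmem
  set B := p.support.sup (fun s => s 0) with hB
  refine ⟨B + 1, fun n hn => ?_⟩
  intro hzero
  have hcoeff : (evP E n p).coeff (σ 0 + n * σ 1) = MvPolynomial.coeff σ p := by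
    rw [evP_apply, Polynomial.finset_sum_coeff]
    rw [Finset.sum_eq_single_of_mem σ hσsupp]
    · simp
    · intro s hs hsne
      rw [Polynomial.coeff_C_mul, Polynomial.coeff_X_pow, if_neg, mul_zero]
      have h1 : s 1 ≤ t1 := Finset.le_sup (f := fun s => s 1) hs
      rcases lt_or_eq_of_le h1 with h1lt | h1eq
      · have hs0 : s 0 ≤ B := Finset.le_sup (f := fun s => s 0) hs
        have hlt : s 0 + n * s 1 < σ 0 + n * σ 1 := by
          calc s 0 + n * s 1 < n + n * s 1 := by omega
            _ = n * (s 1 + 1) := by ring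
            _ ≤ n * σ 1 := Nat.mul_le_mul_left n (by omega)
            _ ≤ σ 0 + n * σ 1 := Nat.le_add_left _ _
        exact ne_of_gt hlt
      · intro heq
        apply hsne
        have h1' : s 1 = σ 1 := by rw [h1eq, hσ1]
        have hns : n * s 1 = n * σ 1 := by rw [h1']
        have h0 : s 0 = σ 0 := by omega
        ext i
        fin_cases i
        · exact h0
        · exact h1'
  rw [hzero, Polynomial.coeff_zero] at hcoeff
  exact (MvPolynomial.mem_support_iff.1 hσsupp) hcoeff.symm

noncomputable def sh : R2 E →ₐ[E] R2 E :=
  MvPolynomial.aeval ![MvPolynomial.X 0, MvPolynomial.X 0 * MvPolynomial.X 1]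

lemma ev_sh (n : ℕ) (p : R2 E) : ev E n (sh E p) = ev E (n + 1) p := by
  have hv : (fun i => ev E n (![MvPolynomial.X 0, MvPolynomial.X 0 * MvPolynomial.X 1] i))
      = ![RatFunc.X, (RatFunc.X : RatFunc E) ^ (n + 1)] := by
    funext i
    fin_cases i <;> simp [ev, pow_succ, mul_comm]
  rw [sh, MvPolynomial.comp_aeval_apply, hv]
  rfl

noncomputable def Sm : ℕ → (R2 E →ₐ[E] R2 E)
  | 0 => AlgHom.id E _
  | m + 1 => (Sm m).comp (sh E)

lemma ev_Sm (m n : ℕ) (p : R2 E) : ev E n (Sm E m p) = ev E (n + m) p := by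
  induction m generalizing p with
  | zero => rfl
  | succ m ih =>
    show ev E n (Sm E m (sh E p)) = _
    rw [ih, ev_sh, ← Nat.add_assoc]

lemma Sm_ne {p : R2 E} (hp : p ≠ 0) (t : ℕ) : Sm E t p ≠ 0 := by
  intro h
  obtain ⟨N, hN⟩ := evP_eventually_ne (E := E) hp
  have h1 : ev E N (Sm E t p) = 0 := by rw [h, map_zero]
  rw [ev_Sm] at h1
  exact ev_ne_of_evP_ne E (N + t) (hN (N + t) (Nat.le_add_right N t)) h1

noncomputable def phi : R2 E →+* Gm E :=
  (Filter.Germ.coeRingHom _).comp (Pi.ringHom fun n => (ev E n).toRingHom)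

lemma isUnit_phi {p : R2 E} (hp : p ≠ 0) : IsUnit (phi E p) := by
  obtain ⟨N, hN⟩ := evP_eventually_ne (E := E) hp
  refine IsUnit.of_mul_eq_one
    (Filter.Germ.ofFun (fun n => (ev E n p)⁻¹ : ℕ → RatFunc E)) ?_
  show Filter.Germ.ofFun (fun n => ev E n p) * _ = 1
  rw [← Filter.Germ.coe_mul, ← Filter.Germ.coe_one]
  apply Filter.Germ.coe_eq.2
  filter_upwards [Filter.eventually_ge_atTop N] with n hn
  exact mul_inv_cancel₀ (ev_ne_of_evP_ne E n (hN n hn))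

noncomputable def Phi : K E →+* Gm E :=
  IsLocalization.lift (M := nonZeroDivisors (R2 E))
    (fun y => isUnit_phi E (mem_nonZeroDivisors_iff_ne_zero.1 y.2))

lemma Phi_alg (p : R2 E) : Phi E (algebraMap (R2 E) (K E) p) = phi E p :=
  IsLocalization.lift_eq _ p

noncomputable def modKG : Module (K E) (Gm E) := Module.compHom _ (Phi E)

attribute [local instance] modKG

lemma smul_eq (c : K E) (x : Gm E) : c • x = Phi E c * x := rfl

noncomputable def Fg (f : ℕ → RatFunc E) (m : ℕ) : Gm E :=
  Filter.Germ.ofFun (fun n => f (n + m))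

lemma Fg_add (f g : ℕ → RatFunc E) (m : ℕ) :
    Fg E (f + g) m = Fg E f m + Fg E g m :=
  (Filter.Germ.coe_add _ _)

lemma sum_phi_mul_Fg {ι : Type*} (s : Finset ι) (c : ι → R2 E) (t : ι → ℕ)
    (f : ℕ → RatFunc E) :
    ∑ i ∈ s, phi E (c i) * Fg E f (t i)
      = Filter.Germ.ofFun (fun n => ∑ i ∈ s, ev E n (c i) * f (n + t i)) := by
  classical
  have h1 : (fun n => ∑ i ∈ s, ev E n (c i) * f (n + t i))
      = ∑ i ∈ s, ((fun n => ev E n (c i)) * (fun n => f (n + t i))) := by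
    funext n
    rw [Finset.sum_apply]
    rfl
  rw [h1]
  show _ = Filter.Germ.coeRingHom _ _
  rw [map_sum]
  refine Finset.sum_congr rfl fun i _ => ?_
  rw [map_mul]
  rfl

lemma mem_span_shifts {f : ℕ → RatFunc E} {d : ℕ} {a : ℕ → R2 E}
    (had : a d ≠ 0)
    (hrec : ∀ n, ∑ j ∈ Finset.range (d + 1), ev E n (a j) * f (n + j) = 0) :
    ∀ m, Fg E f m ∈ Submodule.span (K E) (Set.range fun j : Fin d => Fg E f (j : ℕ)) := by
  intro m
  induction m using Nat.strong_induction_on with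
  | _ m ih =>
    by_cases hm : m < d
    · exact Submodule.subset_span ⟨⟨m, hm⟩, rfl⟩
    · push_neg at hm
      set t := m - d with ht
      have hmt : m = t + d := by omega
      have hpt : ∀ n, ∑ j ∈ Finset.range (d + 1),
          ev E n (Sm E t (a j)) * f (n + (t + j)) = 0 := by
        intro n
        have h := hrec (n + t)
        calc ∑ j ∈ Finset.range (d + 1), ev E n (Sm E t (a j)) * f (n + (t + j))
            = ∑ j ∈ Finset.range (d + 1), ev E (n + t) (a j) * f (n + t + j) := by
              refine Finset.sum_congr rfl fun j _ => ?_
              rw [ev_Sm, ← Nat.add_assoc]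
          _ = 0 := h
      have hG : ∑ j ∈ Finset.range (d + 1), phi E (Sm E t (a j)) * Fg E f (t + j) = 0 := by
        rw [sum_phi_mul_Fg]
        rw [show (fun n => ∑ j ∈ Finset.range (d + 1), ev E n (Sm E t (a j)) * f (n + (t + j)))
            = (0 : ℕ → RatFunc E) from funext hpt]
        exact Filter.Germ.coe_zero
      set c := Sm E t (a d) with hcdef
      have hc : c ≠ 0 := Sm_ne E had t
      set cK : K E := algebraMap (R2 E) (K E) c with hcK
      have hcKne : cK ≠ 0 := by
        rw [hcK, Ne, IsFractionRing.to_map_eq_zero_iff]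
        exact hc
      have hinv : Phi E cK⁻¹ * phi E c = 1 := by
        rw [← Phi_alg, ← map_mul, ← hcK, inv_mul_cancel₀ hcKne, map_one]
      rw [Finset.sum_range_succ] at hG
      have h1 : phi E c * Fg E f (t + d)
          = -∑ j ∈ Finset.range d, phi E (Sm E t (a j)) * Fg E f (t + j) :=
        eq_neg_of_add_eq_zero_right hG
      have hFg : Fg E f m = ∑ j ∈ Finset.range d,
          (-(cK⁻¹ * algebraMap (R2 E) (K E) (Sm E t (a j)))) • Fg E f (t + j) := by
        calc Fg E f m = Fg E f (t + d) := by rw [hmt]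
          _ = (Phi E cK⁻¹ * phi E c) * Fg E f (t + d) := by rw [hinv, one_mul]
          _ = Phi E cK⁻¹ * (phi E c * Fg E f (t + d)) := by ring
          _ = Phi E cK⁻¹ * -∑ j ∈ Finset.range d, phi E (Sm E t (a j)) * Fg E f (t + j) := by
              rw [h1]
          _ = ∑ j ∈ Finset.range d,
              (-(cK⁻¹ * algebraMap (R2 E) (K E) (Sm E t (a j)))) • Fg E f (t + j) := by
              rw [mul_neg, Finset.mul_sum, ← Finset.sum_neg_distrib]
              refine Finset.sum_congr rfl fun j _ => ?_
              rw [smul_eq, map_neg, map_mul, Phi_alg]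
              ring
      rw [hFg]
      exact Submodule.sum_mem _ fun j hj => Submodule.smul_mem _ _
        (ih (t + j) (by have := Finset.mem_range.1 hj; omega))

lemma normalize {f : ℕ → RatFunc E} (d : ℕ) (a : ℕ → R2 E)
    (hex : ∃ j ≤ d, a j ≠ 0)
    (hrec : ∀ n, ∑ j ∈ Finset.range (d + 1), ev E n (a j) * f (n + j) = 0) :
    ∃ (d' : ℕ) (a' : ℕ → R2 E), a' d' ≠ 0 ∧
      ∀ n, ∑ j ∈ Finset.range (d' + 1), ev E n (a' j) * f (n + j) = 0 := by
  classical
  obtain ⟨j0, hj0d, hj0⟩ := hex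
  set s := (Finset.range (d + 1)).filter (fun j => a j ≠ 0) with hs
  have hsne : s.Nonempty := ⟨j0, Finset.mem_filter.2 ⟨Finset.mem_range.2 (by omega), hj0⟩⟩
  set d' := s.max' hsne with hd'
  have hd'mem := s.max'_mem hsne
  have hd'r := Finset.mem_filter.1 hd'mem
  refine ⟨d', a, hd'r.2, fun n => ?_⟩
  have hsub : Finset.range (d' + 1) ⊆ Finset.range (d + 1) := by
    intro x hx
    have h1 := Finset.mem_range.1 hx
    have h2 := Finset.mem_range.1 hd'r.1
    exact Finset.mem_range.2 (by omega)
  rw [Finset.sum_subset hsub]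
  · exact hrec n
  · intro j hj hj'
    have hjz : a j = 0 := by
      by_contra hne
      have hjs : j ∈ s := Finset.mem_filter.2 ⟨hj, hne⟩
      have h5 := Finset.le_max' s j hjs
      have h6 : ¬ j < d' + 1 := fun hc => hj' (Finset.mem_range.2 hc)
      omega
    rw [hjz, map_zero, zero_mul]

lemma factor_ne (i : ℕ) :
    (MvPolynomial.X 1 - MvPolynomial.X 0 ^ i : R2 E) ≠ 0 := by
  intro h
  have h2 := congrArg (evP E (i + 1)) h
  rw [map_sub, map_zero, map_pow] at h2
  have h3 : (Polynomial.X : Polynomial E) ^ (i + 1) - Polynomial.X ^ i = 0 := by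
    simpa [evP] using h2
  have h4 := congrArg (fun q => Polynomial.coeff q (i + 1)) h3
  simp [Polynomial.coeff_X_pow] at h4

lemma add_aux (f g : ℕ → RatFunc E)
    (d : ℕ) (a : ℕ → R2 E) (had : a d ≠ 0)
    (hrecf : ∀ n, ∑ j ∈ Finset.range (d + 1), ev E n (a j) * f (n + j) = 0)
    (e : ℕ) (b : ℕ → R2 E) (hbe : b e ≠ 0)
    (hrecg : ∀ n, ∑ j ∈ Finset.range (e + 1), ev E n (b j) * g (n + j) = 0) :
    ∃ (D : ℕ) (A : ℕ → R2 E), (∃ j ≤ D, A j ≠ 0) ∧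
      ∀ n, ∑ j ∈ Finset.range (D + 1), ev E n (A j) * (f + g) (n + j) = 0 := by
  classical
  set v : (Fin d ⊕ Fin e) → Gm E :=
    Sum.elim (fun j => Fg E f (j : ℕ)) (fun j => Fg E g (j : ℕ)) with hv
  set T := Submodule.span (K E) (Set.range v) with hT
  have hTf : ∀ m, Fg E f m ∈ T := fun m => by
    refine Submodule.span_mono ?_ (mem_span_shifts E had hrecf m)
    rintro x ⟨j, rfl⟩
    exact ⟨Sum.inl j, rfl⟩
  have hTg : ∀ m, Fg E g m ∈ T := fun m => by
    refine Submodule.span_mono ?_ (mem_span_shifts E hbe hrecg m)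
    rintro x ⟨j, rfl⟩
    exact ⟨Sum.inr j, rfl⟩
  have hTh : ∀ m, Fg E (f + g) m ∈ T := fun m => by
    rw [Fg_add]
    exact T.add_mem (hTf m) (hTg m)
  haveI : FiniteDimensional (K E) T := FiniteDimensional.span_of_finite _ (Set.finite_range v)
  set N := d + e with hN
  have hfr : Module.finrank (K E) T ≤ N := by
    have h := finrank_range_le_card (R := K E) v
    simpa [hT, hN, Set.finrank] using h
  set w : Fin (N + 1) → T := fun i => ⟨Fg E (f + g) (i : ℕ), hTh i⟩ with hw
  have hdep : ¬ LinearIndependent (K E) w := by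
    intro h
    have hcard := LinearIndependent.fintype_card_le_finrank (R := K E) (M := T) h
    rw [Fintype.card_fin] at hcard
    omega
  obtain ⟨cc, hccsum, i0, hi0⟩ := Fintype.not_linearIndependent_iff.1 hdep
  have hsum0 : ∑ i, cc i • Fg E (f + g) (i : ℕ) = 0 := by
    have h := congrArg (Subtype.val) hccsum
    simpa [hw] using h
  obtain ⟨bden, hbden⟩ := IsLocalization.exist_integer_multiples
      (nonZeroDivisors (R2 E)) Finset.univ cc
  choose p hp using fun i => hbden i (Finset.mem_univ i)
  have hpne : p i0 ≠ 0 := by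
    intro hz
    apply hi0
    have h := hp i0
    rw [hz, map_zero] at h
    have hb0 : algebraMap (R2 E) (K E) (bden : R2 E) ≠ 0 := by
      rw [Ne, IsFractionRing.to_map_eq_zero_iff]
      exact mem_nonZeroDivisors_iff_ne_zero.1 bden.2
    have h2 := h.symm
    rw [Algebra.smul_def] at h2
    exact (mul_eq_zero.1 h2).resolve_left hb0
  have hzero : ∑ i, phi E (p i) * Fg E (f + g) (i : ℕ) = 0 := by
    calc ∑ i, phi E (p i) * Fg E (f + g) (i : ℕ)
        = ∑ i, ((algebraMap (R2 E) (K E) (bden : R2 E)) * cc i) • Fg E (f + g) (i : ℕ) := by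
          refine Finset.sum_congr rfl fun i _ => ?_
          rw [smul_eq, ← Algebra.smul_def, ← hp i, Phi_alg]
      _ = (algebraMap (R2 E) (K E) (bden : R2 E)) • ∑ i, cc i • Fg E (f + g) (i : ℕ) := by
          rw [Finset.smul_sum]
          refine Finset.sum_congr rfl fun i _ => ?_
          rw [mul_smul]
      _ = 0 := by rw [hsum0, smul_zero]
  have hofun : (Filter.Germ.ofFun
      (fun n => ∑ i : Fin (N + 1), ev E n (p i) * (f + g) (n + (i : ℕ))) : Gm E) = 0 := by
    rw [← sum_phi_mul_Fg E Finset.univ p (fun i => (i : ℕ)) (f + g)]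
    exact hzero
  have hev : ∃ N0, ∀ n ≥ N0,
      (∑ i : Fin (N + 1), ev E n (p i) * (f + g) (n + (i : ℕ))) = 0 := by
    rw [← Filter.Germ.coe_zero] at hofun
    have h2 := Filter.Germ.coe_eq.1 hofun
    obtain ⟨N0, hN0⟩ := Filter.eventually_atTop.1 h2
    exact ⟨N0, fun n hn => hN0 n hn⟩
  obtain ⟨N0, hN0⟩ := hev
  set Q : R2 E := ∏ i ∈ Finset.range N0, (MvPolynomial.X 1 - MvPolynomial.X 0 ^ i) with hQ
  have hQne : Q ≠ 0 := Finset.prod_ne_zero_iff.2 fun i _ => factor_ne E i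
  have hQzero : ∀ n < N0, ev E n Q = 0 := by
    intro n hn
    rw [hQ, map_prod]
    refine Finset.prod_eq_zero (Finset.mem_range.2 hn) ?_
    rw [map_sub, map_pow]
    simp [ev]
  refine ⟨N, (fun m => if h : m < N + 1 then Q * p ⟨m, h⟩ else 0),
    ⟨(i0 : ℕ), Nat.lt_succ_iff.1 i0.2, ?_⟩, ?_⟩
  · show (if h : (i0 : ℕ) < N + 1 then Q * p ⟨(i0 : ℕ), h⟩ else 0) ≠ 0
    rw [dif_pos i0.2]
    simp only [Fin.eta]
    exact mul_ne_zero hQne hpne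
  · intro n
    rw [Finset.sum_range]
    have hA : ∀ i : Fin (N + 1),
        (fun m => if h : m < N + 1 then Q * p ⟨m, h⟩ else 0) (i : ℕ) = Q * p i := by
      intro i
      show (if h : (i : ℕ) < N + 1 then Q * p ⟨(i : ℕ), h⟩ else 0) = Q * p i
      rw [dif_pos i.2]
    calc ∑ i : Fin (N + 1),
          ev E n ((fun m => if h : m < N + 1 then Q * p ⟨m, h⟩ else 0) (i : ℕ))
            * (f + g) (n + (i : ℕ))
        = ev E n Q * ∑ i : Fin (N + 1), ev E n (p i) * (f + g) (n + (i : ℕ)) := by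
          rw [Finset.mul_sum]
          refine Finset.sum_congr rfl fun i _ => ?_
          rw [hA i, map_mul]
          ring
      _ = 0 := by
          rcases lt_or_ge n N0 with h | h
          · rw [hQzero n h, zero_mul]
          · rw [hN0 n h, mul_zero]

end QHolAux

/-- The sum of two `q`-holonomic sequences is `q`-holonomic. -/
theorem IsQHolonomic.add {E : Type} [Field E] [CharZero E] {f g : ℕ → RatFunc E}
    (hf : IsQHolonomic f) (hg : IsQHolonomic g) : IsQHolonomic (f + g) := by
  obtain ⟨d0, a0, hex, hrec⟩ := hf
  obtain ⟨e0, b0, hex', hrec'⟩ := hg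
  obtain ⟨d, a, had, hrecf⟩ := QHolAux.normalize E d0 a0 hex hrec
  obtain ⟨e, b, hbe, hrecg⟩ := QHolAux.normalize E e0 b0 hex' hrec'
  obtain ⟨D, A, hA, hR⟩ := QHolAux.add_aux E f g d a had hrecf e b hbe hrecg
  exact ⟨D, A, hA, hR⟩
end

section
/- If f, g: ℕ → E(q) are q-holonomic sequences, then their pointwise product n ↦ f(n)·g(n) is q-holonomic. -/
open scoped BigOperators

section Aux
open Polynomial Filter Pointwise
set_option synthInstance.maxHeartbeats 1000000
set_option maxHeartbeats 4000000

variable {E : Type} [Field E]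

private lemma ratfunc_mul_denom (c : RatFunc E) :
    c * algebraMap _ _ c.denom = algebraMap _ _ c.num := by
  have h := RatFunc.num_div_denom c
  rw [div_eq_iff (RatFunc.algebraMap_ne_zero (RatFunc.denom_ne_zero c))] at h
  rw [← h]

/-- A sum of `q i * X ^ ε i` with a strictly dominating term is nonzero. -/
private lemma sum_mul_X_pow_ne_zero {ι : Type*} [DecidableEq ι] (S : Finset ι)
    (q : ι → Polynomial E) (ε : ι → ℕ)
    (i0 : ι) (hi0 : i0 ∈ S) (hq0 : q i0 ≠ 0)
    (hlt : ∀ i ∈ S, i ≠ i0 → (q i).natDegree + ε i < (q i0).natDegree + ε i0) :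
    ∑ i ∈ S, q i * Polynomial.X ^ ε i ≠ 0 := by
  intro h
  have hc : (∑ i ∈ S, q i * Polynomial.X ^ ε i).coeff ((q i0).natDegree + ε i0)
      = (q i0).leadingCoeff := by
    rw [Polynomial.finset_sum_coeff, Finset.sum_eq_single i0]
    · rw [Polynomial.coeff_mul_X_pow]; rfl
    · intro b hb hne
      apply Polynomial.coeff_eq_zero_of_natDegree_lt
      calc (q b * Polynomial.X ^ ε b).natDegree ≤ (q b).natDegree + ε b := by
            refine Polynomial.natDegree_mul_le.trans ?_
            rw [Polynomial.natDegree_X_pow]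
        _ < _ := hlt b hb hne
    · intro h'; exact absurd hi0 h'
  rw [h] at hc
  simp only [Polynomial.coeff_zero] at hc
  exact hq0 (Polynomial.leadingCoeff_eq_zero.mp hc.symm)

/-- Lemma A: a nonzero polynomial over `E(q)` evaluated at `q^n` is eventually nonzero. -/
private lemma eventually_eval_pow_ne_zero (p : Polynomial (RatFunc E)) (hp : p ≠ 0) :
    ∀ᶠ n in (atTop : Filter ℕ), p.eval ((RatFunc.X : RatFunc E) ^ n) ≠ 0 := by
  classical
  set S := p.support with hS
  have hSne : S.Nonempty := Polynomial.nonempty_support_iff.mpr hp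
  set q : ℕ → Polynomial E := fun j => (p.coeff j).num * ∏ j' ∈ S.erase j, (p.coeff j').denom
    with hq
  set d : Polynomial E := ∏ j ∈ S, (p.coeff j).denom with hd
  have hqd : ∀ j ∈ S, algebraMap (Polynomial E) (RatFunc E) (q j)
      = p.coeff j * algebraMap (Polynomial E) (RatFunc E) d := by
    intro j hj
    rw [hq, hd, map_mul, ← Finset.mul_prod_erase S _ hj, map_mul]
    simp only [map_prod]
    rw [← mul_assoc]
    congr 1
    exact (ratfunc_mul_denom _).symm
  have hqne : ∀ j ∈ S, q j ≠ 0 := by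
    intro j hj
    apply mul_ne_zero
    · exact RatFunc.num_ne_zero (Polynomial.mem_support_iff.mp hj)
    · exact Finset.prod_ne_zero_iff.mpr fun j' _ => RatFunc.denom_ne_zero _
  set m := S.max' hSne with hm
  have hmS : m ∈ S := S.max'_mem hSne
  set B := S.sup fun j => (q j).natDegree with hB
  filter_upwards [eventually_gt_atTop B] with n hn
  intro heval
  have key : (∑ j ∈ S, q j * Polynomial.X ^ (n * j)) ≠ 0 := by
    refine sum_mul_X_pow_ne_zero S q _ m hmS (hqne m hmS) ?_
    intro j hj hne
    have hjm : j < m := lt_of_le_of_ne (S.le_max' j hj) hne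
    have h1 : (q j).natDegree ≤ B := Finset.le_sup (f := fun j => (q j).natDegree) hj
    have h2 : n * j + n ≤ n * m := by
      have h := Nat.mul_le_mul_left n (Nat.succ_le_of_lt hjm)
      rw [Nat.mul_succ] at h
      exact h
    have h3 : (q j).natDegree < n := lt_of_le_of_lt h1 hn
    omega
  apply key
  apply RatFunc.algebraMap_injective E
  rw [map_sum, map_zero]
  have : ∀ j ∈ S, algebraMap (Polynomial E) (RatFunc E) (q j * Polynomial.X ^ (n * j))
      = p.coeff j * ((RatFunc.X : RatFunc E) ^ n) ^ j * algebraMap (Polynomial E) (RatFunc E) d := by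
    intro j hj
    rw [map_mul, hqd j hj, map_pow, RatFunc.algebraMap_X, ← pow_mul]
    ring
  rw [Finset.sum_congr rfl this, ← Finset.sum_mul]
  have heval' : ∑ j ∈ S, p.coeff j * ((RatFunc.X : RatFunc E) ^ n) ^ j = 0 := by
    rw [← heval]
    conv_rhs => rw [Polynomial.eval_eq_sum, Polynomial.sum_def]
  rw [heval', zero_mul]

/-- Lemma B': nonzero 2-variable polynomial evaluated at `(q, q^n)` is eventually nonzero. -/
private lemma eventually_aeval_ne_zero (b : MvPolynomial (Fin 2) E) (hb : b ≠ 0) :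
    ∀ᶠ n in (atTop : Filter ℕ),
      (MvPolynomial.aeval ![RatFunc.X, (RatFunc.X : RatFunc E) ^ n] b) ≠ 0 := by
  classical
  set S := b.support with hSdef
  have hSne : S.Nonempty := by
    rw [Finset.nonempty_iff_ne_empty, hSdef, Ne, MvPolynomial.support_eq_empty]
    exact hb
  set A := S.sup fun m => m 0 with hA
  obtain ⟨ms, hmsS, hms⟩ := Finset.exists_max_image S (fun m => m 0 + 0 * m 1) hSne
  filter_upwards [eventually_gt_atTop A] with n hn
  obtain ⟨mx, hmxS, hmx⟩ := Finset.exists_max_image S (fun m => m 0 + n * m 1) hSne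
  have hinj : ∀ m ∈ S, ∀ m' ∈ S, m 0 + n * m 1 = m' 0 + n * m' 1 → m = m' := by
    intro m hm m' hm' he
    have h0m : m 0 ≤ A := Finset.le_sup (f := fun m => m 0) hm
    have h0m' : m' 0 ≤ A := Finset.le_sup (f := fun m => m 0) hm'
    have h1 : m 1 = m' 1 := by
      rcases Nat.lt_trichotomy (m 1) (m' 1) with h | h | h
      · exfalso
        have hl : n * (m 1) + n ≤ n * m' 1 := by
          have := Nat.mul_le_mul_left n (Nat.succ_le_of_lt h)
          rwa [Nat.mul_succ] at this
        omega
      · exact h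
      · exfalso
        have hl : n * (m' 1) + n ≤ n * m 1 := by
          have := Nat.mul_le_mul_left n (Nat.succ_le_of_lt h)
          rwa [Nat.mul_succ] at this
        omega
    rw [h1] at he
    have h0 : m 0 = m' 0 := by omega
    apply Finsupp.ext
    intro i
    fin_cases i
    · exact h0
    · exact h1
  have hrep : (MvPolynomial.aeval ![RatFunc.X, (RatFunc.X : RatFunc E) ^ n] b)
      = algebraMap (Polynomial E) (RatFunc E)
        (∑ m ∈ S, Polynomial.C (MvPolynomial.coeff m b) * Polynomial.X ^ (m 0 + n * m 1)) := by
    rw [MvPolynomial.aeval_def, MvPolynomial.eval₂_eq', map_sum]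
    refine Finset.sum_congr rfl fun m _ => ?_
    rw [show (∏ i, (![RatFunc.X, (RatFunc.X : RatFunc E) ^ n]) i ^ m i)
        = (![RatFunc.X, (RatFunc.X : RatFunc E) ^ n]) 0 ^ m 0
          * (![RatFunc.X, (RatFunc.X : RatFunc E) ^ n]) 1 ^ m 1 from Fin.prod_univ_two _]
    rw [map_mul, map_pow, RatFunc.algebraMap_X, pow_add, pow_mul]
    rw [IsScalarTower.algebraMap_apply E (Polynomial E) (RatFunc E), Polynomial.algebraMap_eq]
    simp only [Matrix.cons_val_zero, Matrix.cons_val_one, Matrix.head_cons]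
  rw [hrep]
  intro h0
  have hsum : (∑ m ∈ S, Polynomial.C (MvPolynomial.coeff m b) * Polynomial.X ^ (m 0 + n * m 1))
      = 0 := by
    apply RatFunc.algebraMap_injective E
    rw [h0, map_zero]
  refine sum_mul_X_pow_ne_zero S (fun m => Polynomial.C (MvPolynomial.coeff m b))
    (fun m => m 0 + n * m 1) mx hmxS ?_ ?_ hsum
  · rw [Ne, Polynomial.C_eq_zero]
    exact MvPolynomial.mem_support_iff.mp hmxS
  · intro m hm hne
    simp only [Polynomial.natDegree_C, Nat.zero_add]
    refine lt_of_le_of_ne (hmx m hm) fun he => hne (hinj m hm mx hmxS he)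

noncomputable def gam (E : Type) [Field E] :
    Polynomial (RatFunc E) →+* Germ (atTop : Filter ℕ) (RatFunc E) :=
  (Filter.Germ.coeRingHom _).comp
    (Pi.ringHom fun n => Polynomial.evalRingHom ((RatFunc.X : RatFunc E) ^ n))

lemma gam_apply (p : Polynomial (RatFunc E)) :
    gam E p = ((fun n => p.eval ((RatFunc.X : RatFunc E) ^ n) : ℕ → RatFunc E) :
      Germ (atTop : Filter ℕ) (RatFunc E)) := rfl

lemma isUnit_coe (u : ℕ → RatFunc E) (h : ∀ᶠ n in (atTop : Filter ℕ), u n ≠ 0) :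
    IsUnit ((u : ℕ → RatFunc E) : Germ (atTop : Filter ℕ) (RatFunc E)) := by
  refine IsUnit.of_mul_eq_one (((fun n => (u n)⁻¹ : ℕ → RatFunc E)) :
    Germ (atTop : Filter ℕ) (RatFunc E)) ?_
  have h1 : ((fun n => u n * (u n)⁻¹ : ℕ → RatFunc E) : Germ (atTop : Filter ℕ) (RatFunc E))
      = ((1 : ℕ → RatFunc E) : Germ (atTop : Filter ℕ) (RatFunc E)) :=
    Filter.Germ.coe_eq.mpr (h.mono fun n hn => by simp [mul_inv_cancel₀ hn])
  exact h1

noncomputable def phi (E : Type) [Field E] :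
    RatFunc (RatFunc E) →+* Germ (atTop : Filter ℕ) (RatFunc E) :=
  IsLocalization.lift (M := nonZeroDivisors (Polynomial (RatFunc E))) (g := gam E)
    (fun y => isUnit_coe _ (eventually_eval_pow_ne_zero y.1
      (mem_nonZeroDivisors_iff_ne_zero.mp y.2)))

lemma phi_algebraMap (p : Polynomial (RatFunc E)) :
    phi E (algebraMap (Polynomial (RatFunc E)) (RatFunc (RatFunc E)) p) = gam E p :=
  IsLocalization.lift_eq _ _

noncomputable instance : Algebra (RatFunc (RatFunc E)) (Germ (atTop : Filter ℕ) (RatFunc E)) :=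
  (phi E).toAlgebra

lemma smul_germ (c : RatFunc (RatFunc E)) (x : Germ (atTop : Filter ℕ) (RatFunc E)) :
    c • x = phi E c * x := rfl

noncomputable def emh (E : Type) [Field E] (m : ℕ) :
    MvPolynomial (Fin 2) E →ₐ[E] Polynomial (RatFunc E) :=
  MvPolynomial.aeval ![Polynomial.C RatFunc.X, Polynomial.C ((RatFunc.X : RatFunc E) ^ m) * Polynomial.X]

lemma emh_eval (m n : ℕ) (p : MvPolynomial (Fin 2) E) :
    (emh E m p).eval ((RatFunc.X : RatFunc E) ^ n)
      = MvPolynomial.aeval ![RatFunc.X, (RatFunc.X : RatFunc E) ^ (n + m)] p := by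
  induction p using MvPolynomial.induction_on with
  | C a =>
    rw [show (MvPolynomial.C a : MvPolynomial (Fin 2) E) = algebraMap E _ a from rfl,
      AlgHom.commutes, AlgHom.commutes, Polynomial.algebraMap_apply, Polynomial.eval_C]
  | add p q hp hq => rw [map_add, Polynomial.eval_add, hp, hq, map_add]
  | mul_X p i hp =>
    rw [map_mul, Polynomial.eval_mul, hp, map_mul]
    congr 1
    fin_cases i
    · show Polynomial.eval ((RatFunc.X : RatFunc E) ^ n) ((emh E m) (MvPolynomial.X 0))
          = (MvPolynomial.aeval ![RatFunc.X, (RatFunc.X : RatFunc E) ^ (n + m)]) (MvPolynomial.X 0)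
      rw [show (emh E m) (MvPolynomial.X 0) = Polynomial.C RatFunc.X from MvPolynomial.aeval_X _ 0]
      rw [Polynomial.eval_C]
      rw [show (MvPolynomial.aeval ![RatFunc.X, (RatFunc.X : RatFunc E) ^ (n + m)])
        (MvPolynomial.X 0) = RatFunc.X from MvPolynomial.aeval_X _ 0]
    · show Polynomial.eval ((RatFunc.X : RatFunc E) ^ n) ((emh E m) (MvPolynomial.X 1))
          = (MvPolynomial.aeval ![RatFunc.X, (RatFunc.X : RatFunc E) ^ (n + m)]) (MvPolynomial.X 1)
      rw [show (emh E m) (MvPolynomial.X 1)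
          = Polynomial.C ((RatFunc.X : RatFunc E) ^ m) * Polynomial.X from MvPolynomial.aeval_X _ 1]
      rw [Polynomial.eval_mul, Polynomial.eval_C, Polynomial.eval_X]
      rw [show (MvPolynomial.aeval ![RatFunc.X, (RatFunc.X : RatFunc E) ^ (n + m)])
        (MvPolynomial.X 1) = (RatFunc.X : RatFunc E) ^ (n + m) from MvPolynomial.aeval_X _ 1]
      rw [pow_add, mul_comm]

lemma span_shifts {f : ℕ → RatFunc E} (hf : IsQHolonomic f) :
    ∃ D : ℕ, ∀ k : ℕ,
      ((fun n => f (n + k) : ℕ → RatFunc E) : Germ (atTop : Filter ℕ) (RatFunc E)) ∈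
        Submodule.span (RatFunc (RatFunc E))
          ((fun i : ℕ => ((fun n => f (n + i) : ℕ → RatFunc E) :
            Germ (atTop : Filter ℕ) (RatFunc E))) '' Set.Iio D) := by
  classical
  obtain ⟨d, a, ⟨j0, hj0d, hj0⟩, hrec⟩ := hf
  set T : Finset ℕ := (Finset.range (d+1)).filter (fun j => a j ≠ 0) with hT
  have hTne : T.Nonempty := ⟨j0, by
    rw [hT, Finset.mem_filter, Finset.mem_range]
    exact ⟨by omega, hj0⟩⟩
  set Df := T.max' hTne with hDf
  have hDfT : Df ∈ T := T.max'_mem hTne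
  have hDfd : Df ≤ d := by
    have := (Finset.mem_filter.mp hDfT).1
    rw [Finset.mem_range] at this; omega
  have haDf : a Df ≠ 0 := (Finset.mem_filter.mp hDfT).2
  have hvanish : ∀ j, Df < j → j ≤ d → a j = 0 := by
    intro j h1 h2
    by_contra hne
    have : j ∈ T := Finset.mem_filter.mpr ⟨Finset.mem_range.mpr (by omega), hne⟩
    exact absurd (T.le_max' j this) (by omega)
  refine ⟨Df, ?_⟩
  intro k
  induction k using Nat.strong_induction_on with
  | _ k ih =>
  by_cases hk : k < Df
  · exact Submodule.subset_span ⟨k, hk, rfl⟩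
  push_neg at hk
  set m := k - Df with hm
  have hmDf : m + Df = k := by omega
  clear_value T Df m
  -- pointwise recurrence shifted by m
  have hpt : (fun n => ∑ j ∈ Finset.range (d+1),
      (emh E m (a j)).eval ((RatFunc.X : RatFunc E) ^ n) * f (n + (m + j)) : ℕ → RatFunc E)
      = 0 := by
    funext n
    have h := hrec (n + m)
    calc (∑ j ∈ Finset.range (d+1),
        (emh E m (a j)).eval ((RatFunc.X : RatFunc E) ^ n) * f (n + (m + j)))
        = ∑ j ∈ Finset.range (d+1),
          (MvPolynomial.aeval ![RatFunc.X, (RatFunc.X : RatFunc E) ^ (n + m)] (a j))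
            * f ((n + m) + j) := by
          refine Finset.sum_congr rfl fun j _ => ?_
          rw [emh_eval, ← add_assoc]
      _ = 0 := h
    
  -- germ recurrence
  have hgerm : ∑ j ∈ Finset.range (d+1), gam E (emh E m (a j))
      * ((fun n => f (n + (m + j)) : ℕ → RatFunc E) : Germ (atTop : Filter ℕ) (RatFunc E)) = 0 := by
    have h1 : ∀ j, gam E (emh E m (a j))
        * ((fun n => f (n + (m + j)) : ℕ → RatFunc E) : Germ (atTop : Filter ℕ) (RatFunc E))
        = ((fun n => (emh E m (a j)).eval ((RatFunc.X : RatFunc E) ^ n) * f (n + (m + j)) :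
            ℕ → RatFunc E) : Germ (atTop : Filter ℕ) (RatFunc E)) := fun j => rfl
    calc ∑ j ∈ Finset.range (d+1), gam E (emh E m (a j))
        * ((fun n => f (n + (m + j)) : ℕ → RatFunc E) : Germ (atTop : Filter ℕ) (RatFunc E))
        = ∑ j ∈ Finset.range (d+1),
          ((fun n => (emh E m (a j)).eval ((RatFunc.X : RatFunc E) ^ n) * f (n + (m + j)) :
            ℕ → RatFunc E) : Germ (atTop : Filter ℕ) (RatFunc E)) :=
          Finset.sum_congr rfl fun j _ => h1 j
      _ = ((∑ j ∈ Finset.range (d+1), (fun n => (emh E m (a j)).eval ((RatFunc.X : RatFunc E) ^ n)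
            * f (n + (m + j)) : ℕ → RatFunc E) : ℕ → RatFunc E) :
            Germ (atTop : Filter ℕ) (RatFunc E)) :=
          (map_sum (Filter.Germ.coeRingHom (atTop : Filter ℕ)) _ _).symm
      _ = 0 := by
          rw [show (∑ j ∈ Finset.range (d+1), (fun n => (emh E m (a j)).eval
              ((RatFunc.X : RatFunc E) ^ n) * f (n + (m + j)) : ℕ → RatFunc E) : ℕ → RatFunc E)
              = (fun n => ∑ j ∈ Finset.range (d+1), (emh E m (a j)).eval
                ((RatFunc.X : RatFunc E) ^ n) * f (n + (m + j)) : ℕ → RatFunc E) from by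
              funext n; simp [Finset.sum_apply]]
          rw [hpt]
          exact rfl
  -- drop vanishing terms
  have hgerm2 : ∑ j ∈ Finset.range (Df+1), gam E (emh E m (a j))
      * ((fun n => f (n + (m + j)) : ℕ → RatFunc E) : Germ (atTop : Filter ℕ) (RatFunc E)) = 0 := by
    rw [← hgerm]
    refine Finset.sum_subset ?_ ?_
    · intro x hx
      rw [Finset.mem_range] at hx ⊢
      omega
    · intro x hx hnx
      rw [Finset.mem_range] at hx hnx
      rw [hvanish x (by omega) (by omega), map_zero, map_zero, zero_mul]
  -- leading coefficient is invertible
  have hemne : emh E m (a Df) ≠ 0 := by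
    obtain ⟨n', hn'm, hn'⟩ := ((eventually_ge_atTop m).and (eventually_aeval_ne_zero (a Df) haDf)).exists
    intro h0
    apply hn'
    rw [show n' = (n' - m) + m by omega, ← emh_eval, h0, Polynomial.eval_zero]
  set α : RatFunc (RatFunc E) := algebraMap (Polynomial (RatFunc E)) (RatFunc (RatFunc E))
    (emh E m (a Df)) with hα
  have hαne : α ≠ 0 := RatFunc.algebraMap_ne_zero hemne
  -- solve for the top term
  rw [Finset.sum_range_succ] at hgerm2
  have htop : gam E (emh E m (a Df))
      * ((fun n => f (n + (m + Df)) : ℕ → RatFunc E) : Germ (atTop : Filter ℕ) (RatFunc E))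
      = - ∑ j ∈ Finset.range Df, gam E (emh E m (a j))
        * ((fun n => f (n + (m + j)) : ℕ → RatFunc E) : Germ (atTop : Filter ℕ) (RatFunc E)) := by
    rw [eq_neg_iff_add_eq_zero, add_comm]
    exact hgerm2
  have hinv : phi E α⁻¹ * gam E (emh E m (a Df)) = 1 := by
    rw [← phi_algebraMap, ← hα, ← map_mul, inv_mul_cancel₀ hαne, map_one]
  have hk_expr : ((fun n => f (n + k) : ℕ → RatFunc E) : Germ (atTop : Filter ℕ) (RatFunc E))
      = ∑ j ∈ Finset.range Df,
        (-(α⁻¹ * algebraMap (Polynomial (RatFunc E)) (RatFunc (RatFunc E)) (emh E m (a j))))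
          • ((fun n => f (n + (m + j)) : ℕ → RatFunc E) : Germ (atTop : Filter ℕ) (RatFunc E)) := by
    have : ((fun n => f (n + k) : ℕ → RatFunc E) : Germ (atTop : Filter ℕ) (RatFunc E))
        = phi E α⁻¹ * (gam E (emh E m (a Df))
          * ((fun n => f (n + (m + Df)) : ℕ → RatFunc E) : Germ (atTop : Filter ℕ) (RatFunc E))) := by
      rw [← mul_assoc, hinv, one_mul, hmDf]
    rw [this, htop, mul_neg, Finset.mul_sum, ← Finset.sum_neg_distrib]
    refine Finset.sum_congr rfl fun j _ => ?_
    rw [smul_germ]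
    rw [map_neg, map_mul, phi_algebraMap]
    ring
  rw [hk_expr]
  refine Submodule.sum_mem _ fun j hj => ?_
  refine Submodule.smul_mem _ _ ?_
  exact ih (m + j) (by rw [Finset.mem_range] at hj; omega)

private lemma algE_C (c : E) :
    algebraMap E (RatFunc E) c = algebraMap (Polynomial E) (RatFunc E) (Polynomial.C c) := by
  rw [IsScalarTower.algebraMap_apply E (Polynomial E) (RatFunc E), Polynomial.algebraMap_eq]

private lemma aeval_toMv (v : Fin 2 → RatFunc E) (hv : v 0 = RatFunc.X) (dp : Polynomial E) :
    MvPolynomial.aeval v (Polynomial.eval₂ MvPolynomial.C (MvPolynomial.X 0) dp)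
      = algebraMap (Polynomial E) (RatFunc E) dp := by
  induction dp using Polynomial.induction_on' with
  | add p q hp hq => rw [Polynomial.eval₂_add, map_add, hp, hq, map_add]
  | monomial t c =>
    rw [Polynomial.eval₂_monomial, map_mul, map_pow, MvPolynomial.aeval_X, hv,
      MvPolynomial.aeval_C, algE_C,
      ← Polynomial.C_mul_X_pow_eq_monomial, map_mul, map_pow, RatFunc.algebraMap_X]

theorem IsQHolonomic.mul' {f g : ℕ → RatFunc E}
    (hf : IsQHolonomic f) (hg : IsQHolonomic g) :
    IsQHolonomic (fun n => f n * g n) := by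
  classical
  obtain ⟨Df, hDf⟩ := span_shifts hf
  obtain ⟨Dg, hDg⟩ := span_shifts hg
  set F := RatFunc (RatFunc E)
  set A := Germ (atTop : Filter ℕ) (RatFunc E)
  set Sf : Set A := (fun i : ℕ => ((fun n => f (n + i) : ℕ → RatFunc E) : A)) '' Set.Iio Df with hSf
  set Sg : Set A := (fun i : ℕ => ((fun n => g (n + i) : ℕ → RatFunc E) : A)) '' Set.Iio Dg with hSg
  have hfin : (Sf * Sg).Finite := Set.Finite.mul
    ((Set.finite_Iio Df).image _) ((Set.finite_Iio Dg).image _)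
  set W : Submodule F A := Submodule.span F (Sf * Sg) with hW
  haveI : FiniteDimensional F W := FiniteDimensional.span_of_finite F hfin
  have hFp : ∀ k : ℕ, ((fun n => f (n + k) * g (n + k) : ℕ → RatFunc E) : A) ∈ W := by
    intro k
    have h1 : ((fun n => f (n + k) * g (n + k) : ℕ → RatFunc E) : A)
        = ((fun n => f (n + k) : ℕ → RatFunc E) : A) * ((fun n => g (n + k) : ℕ → RatFunc E) : A) :=
      rfl
    rw [h1, hW, ← Submodule.span_mul_span]
    exact Submodule.mul_mem_mul (hDf k) (hDg k)
  set D := Module.finrank F W with hD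
  set v : Fin (D + 1) → W := fun i => ⟨_, hFp i⟩ with hv
  have hdep : ¬ LinearIndependent F v := by
    intro h
    have := LinearIndependent.fintype_card_le_finrank h
    rw [Fintype.card_fin] at this
    omega
  obtain ⟨c, hcsum, i0, hi0⟩ := Fintype.not_linearIndependent_iff.mp hdep
  -- push the relation into A
  have hcA : ∑ i : Fin (D + 1), c i • ((fun n => f (n + ↑i) * g (n + ↑i) : ℕ → RatFunc E) : A)
      = 0 := by
    have := congrArg (Subtype.val : W → A) hcsum
    rw [Submodule.coe_sum] at this
    simpa using this
  -- clear denominators in F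
  set p : Fin (D + 1) → Polynomial (RatFunc E) := fun i =>
    (c i).num * ∏ i' ∈ Finset.univ.erase i, (c i').denom with hp
  set r : Polynomial (RatFunc E) := ∏ i : Fin (D + 1), (c i).denom with hr
  have hpr : ∀ i, algebraMap (Polynomial (RatFunc E)) F (p i)
      = c i * algebraMap (Polynomial (RatFunc E)) F r := by
    intro i
    rw [hp, hr, map_mul, ← Finset.mul_prod_erase Finset.univ _ (Finset.mem_univ i), map_mul,
      ← mul_assoc]
    simp only [map_prod]
    congr 1
    exact (ratfunc_mul_denom _).symm
  have hpi0 : p i0 ≠ 0 := mul_ne_zero (RatFunc.num_ne_zero hi0)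
    (Finset.prod_ne_zero_iff.mpr fun i' _ => RatFunc.denom_ne_zero _)
  have hgermsum : ∑ i : Fin (D + 1), gam E (p i)
      * ((fun n => f (n + ↑i) * g (n + ↑i) : ℕ → RatFunc E) : A) = 0 := by
    calc ∑ i : Fin (D + 1), gam E (p i)
        * ((fun n => f (n + ↑i) * g (n + ↑i) : ℕ → RatFunc E) : A)
        = phi E (algebraMap (Polynomial (RatFunc E)) F r)
          * ∑ i : Fin (D + 1), c i • ((fun n => f (n + ↑i) * g (n + ↑i) : ℕ → RatFunc E) : A) := by
          rw [Finset.mul_sum]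
          refine Finset.sum_congr rfl fun i _ => ?_
          rw [smul_germ, ← phi_algebraMap, hpr i, map_mul]
          ring
      _ = 0 := by rw [hcA, mul_zero]
  -- turn the germ identity into an eventual identity
  have hev : ∀ᶠ n in (atTop : Filter ℕ),
      ∑ i : Fin (D + 1), (p i).eval ((RatFunc.X : RatFunc E) ^ n) * (f (n + ↑i) * g (n + ↑i))
        = 0 := by
    have h1 : ∀ i : Fin (D + 1), gam E (p i)
        * ((fun n => f (n + ↑i) * g (n + ↑i) : ℕ → RatFunc E) : A)
        = ((fun n => (p i).eval ((RatFunc.X : RatFunc E) ^ n) * (f (n + ↑i) * g (n + ↑i)) :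
            ℕ → RatFunc E) : A) := fun i => rfl
    have h0 : ((∑ i : Fin (D + 1), (fun n => (p i).eval ((RatFunc.X : RatFunc E) ^ n)
        * (f (n + ↑i) * g (n + ↑i)) : ℕ → RatFunc E) : ℕ → RatFunc E) : A) = 0 := by
      calc ((∑ i : Fin (D + 1), (fun n => (p i).eval ((RatFunc.X : RatFunc E) ^ n)
          * (f (n + ↑i) * g (n + ↑i)) : ℕ → RatFunc E) : ℕ → RatFunc E) : A)
          = ∑ i : Fin (D + 1), ((fun n => (p i).eval ((RatFunc.X : RatFunc E) ^ n)
            * (f (n + ↑i) * g (n + ↑i)) : ℕ → RatFunc E) : A) :=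
            map_sum (Filter.Germ.coeRingHom (atTop : Filter ℕ)) _ Finset.univ
        _ = ∑ i : Fin (D + 1), gam E (p i)
            * ((fun n => f (n + ↑i) * g (n + ↑i) : ℕ → RatFunc E) : A) :=
            Finset.sum_congr rfl fun i _ => (h1 i).symm
        _ = 0 := hgermsum
    have h2 : ((∑ i : Fin (D + 1), (fun n => (p i).eval ((RatFunc.X : RatFunc E) ^ n)
        * (f (n + ↑i) * g (n + ↑i)) : ℕ → RatFunc E) : ℕ → RatFunc E))
        =ᶠ[atTop] (0 : ℕ → RatFunc E) := Filter.Germ.coe_eq.mp h0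
    filter_upwards [h2] with n hn
    calc ∑ i : Fin (D + 1), (p i).eval ((RatFunc.X : RatFunc E) ^ n) * (f (n + ↑i) * g (n + ↑i))
        = (∑ i : Fin (D + 1), (fun n => (p i).eval ((RatFunc.X : RatFunc E) ^ n)
            * (f (n + ↑i) * g (n + ↑i)) : ℕ → RatFunc E)) n := by
          rw [Finset.sum_apply]
      _ = 0 := hn
  obtain ⟨N, hN⟩ := Filter.eventually_atTop.mp hev
  -- clear denominators down to E[X]
  set δ : Polynomial E := ∏ i : Fin (D + 1), ∏ t ∈ (p i).support, ((p i).coeff t).denom with hδ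
  have hδne : δ ≠ 0 := Finset.prod_ne_zero_iff.mpr fun i _ =>
    Finset.prod_ne_zero_iff.mpr fun t _ => RatFunc.denom_ne_zero _
  have hdd : ∀ (i : Fin (D + 1)) (t : ℕ), ∃ dd : Polynomial E,
      algebraMap (Polynomial E) (RatFunc E) dd
        = algebraMap (Polynomial E) (RatFunc E) δ * (p i).coeff t := by
    intro i t
    by_cases ht : t ∈ (p i).support
    · have hdvd : ((p i).coeff t).denom ∣ δ := by
        refine dvd_trans (Finset.dvd_prod_of_mem (fun t => ((p i).coeff t).denom) ht) ?_
        exact Finset.dvd_prod_of_mem _ (Finset.mem_univ i)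
      obtain ⟨e, he⟩ := hdvd
      refine ⟨e * ((p i).coeff t).num, ?_⟩
      rw [map_mul, ← ratfunc_mul_denom ((p i).coeff t), he, map_mul]
      ring
    · exact ⟨0, by rw [map_zero, Polynomial.notMem_support_iff.mp ht, mul_zero]⟩
  choose dd hddp using hdd
  set b : Fin (D + 1) → MvPolynomial (Fin 2) E := fun i =>
    ∑ t ∈ (p i).support, Polynomial.eval₂ MvPolynomial.C (MvPolynomial.X 0) (dd i t)
      * (MvPolynomial.X 1) ^ t with hb
  have heval_b : ∀ (i : Fin (D + 1)) (n : ℕ),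
      MvPolynomial.aeval ![RatFunc.X, (RatFunc.X : RatFunc E) ^ n] (b i)
        = algebraMap (Polynomial E) (RatFunc E) δ * (p i).eval ((RatFunc.X : RatFunc E) ^ n) := by
    intro i n
    rw [hb, map_sum]
    have h1 : ∀ t ∈ (p i).support,
        MvPolynomial.aeval ![RatFunc.X, (RatFunc.X : RatFunc E) ^ n]
          (Polynomial.eval₂ MvPolynomial.C (MvPolynomial.X 0) (dd i t) * (MvPolynomial.X 1) ^ t)
        = algebraMap (Polynomial E) (RatFunc E) δ
          * ((p i).coeff t * ((RatFunc.X : RatFunc E) ^ n) ^ t) := by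
      intro t _
      rw [map_mul, map_pow, MvPolynomial.aeval_X, aeval_toMv _ rfl, hddp]
      rw [show (![RatFunc.X, (RatFunc.X : RatFunc E) ^ n] 1) = (RatFunc.X : RatFunc E) ^ n from rfl]
      ring
    rw [Finset.sum_congr rfl h1, ← Finset.mul_sum]
    congr 1
    conv_rhs => rw [Polynomial.eval_eq_sum, Polynomial.sum_def]
  -- nonzeroness of b i0
  have hbne : b i0 ≠ 0 := by
    obtain ⟨n1, hn1⟩ := (eventually_eval_pow_ne_zero (p i0) hpi0).exists
    intro h0
    apply mul_ne_zero (RatFunc.algebraMap_ne_zero hδne) hn1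
    rw [← heval_b i0 n1, h0, map_zero]
  -- the mask polynomial
  set M : MvPolynomial (Fin 2) E := ∏ i ∈ Finset.range N,
    (MvPolynomial.X 1 - (MvPolynomial.X 0) ^ i) with hM
  have hMeval : ∀ n : ℕ, MvPolynomial.aeval ![RatFunc.X, (RatFunc.X : RatFunc E) ^ n] M
      = ∏ i ∈ Finset.range N, ((RatFunc.X : RatFunc E) ^ n - (RatFunc.X : RatFunc E) ^ i) := by
    intro n
    rw [hM, map_prod]
    refine Finset.prod_congr rfl fun i _ => ?_
    rw [map_sub, map_pow, MvPolynomial.aeval_X, MvPolynomial.aeval_X]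
    rfl
  have hXpow_ne : ∀ a b' : ℕ, a ≠ b' → (RatFunc.X : RatFunc E) ^ a ≠ (RatFunc.X : RatFunc E) ^ b' := by
    intro a b' hab h
    rw [← RatFunc.algebraMap_X, ← map_pow, ← map_pow] at h
    have := RatFunc.algebraMap_injective E h
    apply hab
    calc a = (Polynomial.X ^ a : Polynomial E).natDegree := (Polynomial.natDegree_X_pow a).symm
      _ = (Polynomial.X ^ b' : Polynomial E).natDegree := by rw [this]
      _ = b' := Polynomial.natDegree_X_pow b'
  have hMne : M ≠ 0 := by
    intro h0
    have h1 : MvPolynomial.aeval ![RatFunc.X, (RatFunc.X : RatFunc E) ^ N] M ≠ 0 := by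
      rw [hMeval]
      refine Finset.prod_ne_zero_iff.mpr fun i hi => ?_
      rw [Finset.mem_range] at hi
      exact sub_ne_zero_of_ne (hXpow_ne N i (by omega))
    rw [h0, map_zero] at h1
    exact h1 rfl
  -- assemble the recurrence
  refine ⟨D, fun k => if h : k < D + 1 then b ⟨k, h⟩ * M else 0, ⟨i0.1, by omega, ?_⟩, ?_⟩
  · show (if h : (i0 : ℕ) < D + 1 then b ⟨↑i0, h⟩ * M else 0) ≠ 0
    rw [dif_pos i0.2]
    exact mul_ne_zero hbne hMne
  · intro n
    have hcond : ∀ i : Fin (D + 1),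
        (if h : (i : ℕ) < D + 1 then b ⟨↑i, h⟩ * M else 0) = b i * M := by
      intro i
      rw [dif_pos i.2]
    have hsum_eq : ∑ k ∈ Finset.range (D + 1),
        (MvPolynomial.aeval ![RatFunc.X, (RatFunc.X : RatFunc E) ^ n])
          (if h : k < D + 1 then b ⟨k, h⟩ * M else 0) * ((fun n => f n * g n) (n + k))
        = ∑ i : Fin (D + 1), (MvPolynomial.aeval ![RatFunc.X, (RatFunc.X : RatFunc E) ^ n])
            (b i * M) * (f (n + ↑i) * g (n + ↑i)) := by
      rw [Finset.sum_range fun k => (MvPolynomial.aeval ![RatFunc.X, (RatFunc.X : RatFunc E) ^ n])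
        (if h : k < D + 1 then b ⟨k, h⟩ * M else 0) * ((fun n => f n * g n) (n + k))]
      exact Finset.sum_congr rfl fun i _ => by rw [hcond i]
    rw [hsum_eq]
    by_cases hn : n < N
    · refine Finset.sum_eq_zero fun i _ => ?_
      rw [map_mul, hMeval]
      rw [show (∏ i ∈ Finset.range N, ((RatFunc.X : RatFunc E) ^ n - (RatFunc.X : RatFunc E) ^ i))
        = 0 from Finset.prod_eq_zero (Finset.mem_range.mpr hn) (sub_self _), mul_zero, zero_mul]
    · push_neg at hn
      calc ∑ i : Fin (D + 1), (MvPolynomial.aeval ![RatFunc.X, (RatFunc.X : RatFunc E) ^ n])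
            (b i * M) * (f (n + ↑i) * g (n + ↑i))
          = (MvPolynomial.aeval ![RatFunc.X, (RatFunc.X : RatFunc E) ^ n] M
              * algebraMap (Polynomial E) (RatFunc E) δ)
            * ∑ i : Fin (D + 1), (p i).eval ((RatFunc.X : RatFunc E) ^ n)
              * (f (n + ↑i) * g (n + ↑i)) := by
            rw [Finset.mul_sum]
            refine Finset.sum_congr rfl fun i _ => ?_
            rw [map_mul, heval_b]
            ring
        _ = 0 := by rw [hN n hn, mul_zero]


end Aux

/-- The pointwise product of two `q`-holonomic sequences is `q`-holonomic. -/
theorem IsQHolonomic.mul {E : Type} [Field E] [CharZero E] {f g : ℕ → RatFunc E}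
    (hf : IsQHolonomic f) (hg : IsQHolonomic g) :
    IsQHolonomic (fun n => f n * g n) := by
  exact IsQHolonomic.mul' hf hg
end
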